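/- The map φ : N → End_F(V) defined by φ(n) = n^{−1} ∘ X ∘ n − X takes its values in 𝔬, is surjective onto 𝔬, and satisfies φ(n₁) = φ(n₂) if and only if n₂ ∘ n₁^{−1} ∈ N_X; consequently φ induces a bijection from the set of right cosets N_X\N onto 𝔬. -/

import Mathlib

/-- Index type of the standard basis `e(i,j,k)`: triples `(i,j,k)` with
`1 ≤ i ≤ j ≤ r`, `1 ≤ k ≤ d j`. -/
def RIdx (r : ℕ) (d : ℕ → ℕ) : Type :=
  {x : ℕ × ℕ × ℕ //
    1 ≤ x.1 ∧ x.1 ≤ x.2.1 ∧ x.2.1 ≤ r ∧ 1 ≤ x.2.2 ∧ x.2.2 ≤ d x.2.1}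

/-- The weight `p(i,j) = (i−1)(2r−i+2)/2 + (r−j+1)`. -/
def pfun (r i j : ℕ) : ℤ :=
  ((i : ℤ) - 1) * (2 * (r : ℤ) - (i : ℤ) + 2) / 2 + ((r : ℤ) - (j : ℤ) + 1)

/-- `𝔫^{≥t}`: endomorphisms all of whose nonzero blocks (matrix entries in the basis
`e`) occur for pairs with `p(i,j) − p(i',j') ≥ t`. -/
def nGE {F : Type*} [Field F] {V : Type*} [AddCommGroup V] [Module F V]
    (r : ℕ) (d : ℕ → ℕ) (e : Module.Basis (RIdx r d) F V) (t : ℤ) :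
    Set (Module.End F V) :=
  {A | ∀ x y : RIdx r d, e.repr (A (e x)) y ≠ 0 →
    t ≤ pfun r x.val.1 x.val.2.1 - pfun r y.val.1 y.val.2.1}

/-- `𝔬^{≥t}`: endomorphisms all of whose nonzero blocks occur for pairs with
`i > 1` and `p(i−1,j) − p(i',j') ≥ t`. -/
def oGE {F : Type*} [Field F] {V : Type*} [AddCommGroup V] [Module F V]
    (r : ℕ) (d : ℕ → ℕ) (e : Module.Basis (RIdx r d) F V) (t : ℤ) :
    Set (Module.End F V) :=
  {A | ∀ x y : RIdx r d, e.repr (A (e x)) y ≠ 0 →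
    1 < x.val.1 ∧
      t ≤ pfun r (x.val.1 - 1) x.val.2.1 - pfun r y.val.1 y.val.2.1}

/-- The group `N = {id + u : u ∈ 𝔫}`, realized as the set of units of `End_F(V)`
whose value is of the form `1 + u` with `u ∈ 𝔫 = 𝔫^{≥1}`. -/
def Nset {F : Type*} [Field F] {V : Type*} [AddCommGroup V] [Module F V]
    (r : ℕ) (d : ℕ → ℕ) (e : Module.Basis (RIdx r d) F V) :
    Set (Module.End F V)ˣ :=
  {n | ∃ u ∈ nGE r d e 1, (n : Module.End F V) = 1 + u}

/-! ### Integer arithmetic about `pfun` -/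

lemma stmt14_even_aux (i r : ℤ) : Even ((i-1)*(2*r - i + 2)) := by
  rcases Int.even_or_odd i with ⟨k, hk⟩ | ⟨k, hk⟩
  · exact ⟨(k+k-1)*(r-k+1), by subst hk; ring⟩
  · exact ⟨k*(2*r - i + 2), by subst hk; ring⟩

lemma two_pfun (r i j : ℕ) : 2 * pfun r i j
    = ((i:ℤ)-1)*(2*(r:ℤ)-(i:ℤ)+2) + 2*((r:ℤ)-(j:ℤ)+1) := by
  unfold pfun
  obtain ⟨k, hk⟩ := stmt14_even_aux (i:ℤ) (r:ℤ)
  rw [hk]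
  omega

lemma pA (r i j i' j' : ℤ) (h2 : i ≤ j) (h3 : j ≤ r)
    (h5 : i' ≤ j') (h6 : j' ≤ r) (hii : i < i') :
    (i-1)*(2*r-i+2) + 2*(r-j+1) < (i'-1)*(2*r-i'+2) + 2*(r-j'+1) := by
  nlinarith [mul_nonneg (by linarith : (0:ℤ) ≤ i' - i - 1) (by linarith : (0:ℤ) ≤ r - i'),
    sq_nonneg ((i':ℤ) - i)]

lemma pfunA (r : ℕ) {i j i' j' : ℕ} (h2 : i ≤ j) (h3 : j ≤ r)
    (h5 : i' ≤ j') (h6 : j' ≤ r)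
    (h : pfun r i' j' ≤ pfun r i j) : i' ≤ i := by
  by_contra hc
  have := pA r i j i' j' (by exact_mod_cast h2)
    (by exact_mod_cast h3) (by exact_mod_cast h5)
    (by exact_mod_cast h6) (by exact_mod_cast Nat.lt_of_not_le hc)
  have A := two_pfun r i j
  have B := two_pfun r i' j'
  omega

lemma pB (r x1 j y1 j' : ℕ) {t : ℤ} (hx : y1 + 1 ≤ x1)
    (h : t ≤ pfun r x1 j - pfun r (y1+1) j') :
    t ≤ pfun r (x1-1) j - pfun r y1 j' := by
  have A := two_pfun r x1 j
  have B := two_pfun r (x1-1) j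
  have C := two_pfun r (y1+1) j'
  have D := two_pfun r y1 j'
  rw [show ((x1-1:ℕ):ℤ) = (x1:ℤ)-1 by omega] at B
  have hx' : (y1:ℤ)+1 ≤ (x1:ℤ) := by exact_mod_cast hx
  push_cast at C
  nlinarith [A, B, C, D, h, hx']

lemma pC (r x1 j w1 w2 m : ℕ) {t : ℤ} (hm : m + 1 ≤ w1) (hw : w1 ≤ x1 + m)
    (h : t ≤ pfun r (x1+m) j - pfun r w1 w2) :
    t ≤ pfun r x1 j - pfun r (w1-m) w2 := by
  have A := two_pfun r (x1+m) j
  have B := two_pfun r x1 j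
  have C := two_pfun r w1 w2
  have D := two_pfun r (w1-m) w2
  rw [show ((w1-m:ℕ):ℤ) = (w1:ℤ)-m by omega] at D
  push_cast at A
  have hw' : (w1:ℤ) ≤ (x1:ℤ) + m := by exact_mod_cast hw
  nlinarith [mul_nonneg (by positivity : (0:ℤ) ≤ (m:ℤ)) (by linarith : (0:ℤ) ≤ (x1:ℤ)+m-w1)]

lemma pfun_bounds (r i j : ℕ) (h1 : 1 ≤ i) (h2 : i ≤ j) (h3 : j ≤ r) :
    1 ≤ pfun r i j ∧ pfun r i j ≤ (r:ℤ)*r + 3*r := by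
  have A := two_pfun r i j
  have h1' : (1:ℤ) ≤ i := by exact_mod_cast h1
  have h2' : (i:ℤ) ≤ j := by exact_mod_cast h2
  have h3' : (j:ℤ) ≤ r := by exact_mod_cast h3
  constructor
  · nlinarith [mul_nonneg (by linarith : (0:ℤ) ≤ (i:ℤ)-1) (by linarith : (0:ℤ) ≤ 2*(r:ℤ)-i+2)]
  · nlinarith [mul_nonneg (by linarith : (0:ℤ) ≤ (r:ℤ)-i) (by linarith : (0:ℤ) ≤ (i:ℤ)+r)]

/-! ### Basis toolkit -/

section
variable {r : ℕ} {d : ℕ → ℕ}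

def rshift (z : RIdx r d) (i' : ℕ) (h1 : 1 ≤ i') (h2 : i' ≤ z.val.2.1) : RIdx r d :=
  ⟨(i', z.val.2), h1, h2, z.prop.2.2.1, z.prop.2.2.2⟩

@[simp] lemma rshift_val (z : RIdx r d) (i' h1 h2) :
    (rshift z i' h1 h2).val = (i', z.val.2) := rfl

lemma rshift_self (z : RIdx r d) (h1 h2) : rshift z z.val.1 h1 h2 = z := by
  apply Subtype.ext; rfl

lemma rshift_rshift (z : RIdx r d) (a b ha1 ha2 hb1 hb2) :
    rshift (rshift z a ha1 ha2) b hb1 hb2 = rshift z b hb1 (by simpa using hb2) := by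
  apply Subtype.ext; rfl

variable {F : Type*} [Field F] {V : Type*} [AddCommGroup V] [Module F V]
  (e : Module.Basis (RIdx r d) F V)

lemma repr_apply_sum (A : Module.End F V) (v : V) (y : RIdx r d) :
    e.repr (A v) y = (e.repr v).sum fun z c => c * e.repr (A (e z)) y := by
  conv_lhs => rw [← e.linearCombination_repr v]
  rw [Finsupp.linearCombination_apply, Finsupp.sum, map_sum, map_sum, Finsupp.finset_sum_apply]
  rw [Finsupp.sum]
  refine Finset.sum_congr rfl fun z _ => ?_
  rw [map_smul, map_smul, Finsupp.smul_apply, smul_eq_mul]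

lemma exists_mid {A : Module.End F V} {v : V} {y : RIdx r d}
    (h : e.repr (A v) y ≠ 0) :
    ∃ z, e.repr v z ≠ 0 ∧ e.repr (A (e z)) y ≠ 0 := by
  rw [repr_apply_sum] at h
  obtain ⟨z, _, hz⟩ := Finset.exists_ne_zero_of_sum_ne_zero h
  exact ⟨z, fun h0 => hz (by simp [h0]), fun h0 => hz (by simp [h0])⟩

lemma apply_eq_zero_of (A : Module.End F V) (v : V)
    (h : ∀ w, e.repr v w ≠ 0 → A (e w) = 0) : A v = 0 := by
  conv_lhs => rw [← e.linearCombination_repr v]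
  rw [Finsupp.linearCombination_apply, Finsupp.sum, map_sum]
  refine Finset.sum_eq_zero fun w hw => ?_
  rw [map_smul, h w (Finsupp.mem_support_iff.mp hw), smul_zero]

lemma eq_of_repr_basis {z y : RIdx r d} (h : e.repr (e z) y ≠ 0) : y = z := by
  classical
  by_contra hc
  rw [e.repr_self_apply] at h
  simp [Ne.symm hc] at h

variable {e}

/-! ### Closure properties of `nGE` and `oGE` -/

lemma nGE_zero_mem {t : ℤ} : (0 : Module.End F V) ∈ nGE r d e t := by
  intro x y h; simp at h

lemma oGE_zero_mem {t : ℤ} : (0 : Module.End F V) ∈ oGE r d e t := by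
  intro x y h; simp at h

lemma nGE_mono {s t : ℤ} (hst : s ≤ t) : nGE r d e t ⊆ nGE r d e s :=
  fun _ hA x y h => le_trans hst (hA x y h)

lemma oGE_mono {s t : ℤ} (hst : s ≤ t) : oGE r d e t ⊆ oGE r d e s :=
  fun _ hA x y h => ⟨(hA x y h).1, le_trans hst (hA x y h).2⟩

lemma nGE_add {A B : Module.End F V} {t : ℤ} (hA : A ∈ nGE r d e t)
    (hB : B ∈ nGE r d e t) : A + B ∈ nGE r d e t := by
  intro x y h
  simp only [LinearMap.add_apply, map_add, Finsupp.add_apply] at h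
  rcases (by by_contra hc; push_neg at hc; simp [hc.1, hc.2] at h :
    e.repr (A (e x)) y ≠ 0 ∨ e.repr (B (e x)) y ≠ 0) with h' | h'
  · exact hA x y h'
  · exact hB x y h'

lemma oGE_add {A B : Module.End F V} {t : ℤ} (hA : A ∈ oGE r d e t)
    (hB : B ∈ oGE r d e t) : A + B ∈ oGE r d e t := by
  intro x y h
  simp only [LinearMap.add_apply, map_add, Finsupp.add_apply] at h
  rcases (by by_contra hc; push_neg at hc; simp [hc.1, hc.2] at h :
    e.repr (A (e x)) y ≠ 0 ∨ e.repr (B (e x)) y ≠ 0) with h' | h'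
  · exact hA x y h'
  · exact hB x y h'

lemma nGE_neg {A : Module.End F V} {t : ℤ} (hA : A ∈ nGE r d e t) :
    -A ∈ nGE r d e t := by
  intro x y h
  refine hA x y ?_
  simp only [LinearMap.neg_apply, map_neg, Finsupp.neg_apply, neg_ne_zero] at h
  exact h

lemma nGE_sum {ι : Type*} {sfin : Finset ι} {A : ι → Module.End F V} {t : ℤ}
    (hA : ∀ m ∈ sfin, A m ∈ nGE r d e t) : (∑ m ∈ sfin, A m) ∈ nGE r d e t := by
  classical
  induction sfin using Finset.induction with
  | empty => simpa using nGE_zero_mem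
  | insert _ _ hm ih =>
    rw [Finset.sum_insert hm]
    exact nGE_add (hA _ (Finset.mem_insert_self _ _))
      (ih fun m hm' => hA m (Finset.mem_insert_of_mem hm'))

lemma nGE_mul {A B : Module.End F V} {s t : ℤ} (hA : A ∈ nGE r d e s)
    (hB : B ∈ nGE r d e t) : A * B ∈ nGE r d e (s + t) := by
  intro x y h
  rw [Module.End.mul_apply] at h
  obtain ⟨z, hz1, hz2⟩ := exists_mid e h
  have := hB x z hz1
  have := hA z y hz2
  omega

lemma nGE_mul_oGE {A B : Module.End F V} {s t : ℤ} (hA : A ∈ nGE r d e s)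
    (hB : B ∈ oGE r d e t) : A * B ∈ oGE r d e (s + t) := by
  intro x y h
  rw [Module.End.mul_apply] at h
  obtain ⟨z, hz1, hz2⟩ := exists_mid e h
  have h1 := hB x z hz1
  have h2 := hA z y hz2
  exact ⟨h1.1, by omega⟩

lemma nGE_univ (A : Module.End F V) : A ∈ nGE r d e (1 - ((r:ℤ)*r + 3*r)) := by
  intro x y h
  have hx := pfun_bounds r x.val.1 x.val.2.1 x.prop.1 x.prop.2.1 x.prop.2.2.1
  have hy := pfun_bounds r y.val.1 y.val.2.1 y.prop.1 y.prop.2.1 y.prop.2.2.1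
  omega

lemma nGE_eq_zero {A : Module.End F V} (hA : A ∈ nGE r d e ((r:ℤ)*r + 3*r)) :
    A = 0 := by
  apply e.ext
  intro x
  rw [LinearMap.zero_apply]
  have h0 : e.repr (A (e x)) = 0 := by
    ext y
    by_contra h
    have := hA x y h
    have hx := pfun_bounds r x.val.1 x.val.2.1 x.prop.1 x.prop.2.1 x.prop.2.2.1
    have hy := pfun_bounds r y.val.1 y.val.2.1 y.prop.1 y.prop.2.1 y.prop.2.2.1
    omega
  simpa using congrArg e.repr.symm h0

lemma nGE_pow {u : Module.End F V} (hu : u ∈ nGE r d e 1) (k : ℕ) (hk : 1 ≤ k) :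
    u ^ k ∈ nGE r d e k := by
  induction k with
  | zero => omega
  | succ k ih =>
    rcases Nat.eq_or_lt_of_le hk with h1 | h1
    · simpa [← h1] using hu
    · have hc : ((k+1:ℕ):ℤ) = (k:ℤ)+1 := by push_cast; ring
      rw [pow_succ, hc]
      exact nGE_mul (ih (by omega)) hu

/-- `Z ∈ 𝔬` kills the bottom level. -/
lemma oGE_bot {Z : Module.End F V} {t : ℤ} (hZ : Z ∈ oGE r d e t)
    {z : RIdx r d} (hz : z.val.1 = 1) : Z (e z) = 0 := by
  have h0 : e.repr (Z (e z)) = 0 := by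
    ext y
    by_contra h
    have := (hZ z y h).1
    omega
  simpa using congrArg e.repr.symm h0

/-- inverses in `N`. -/
lemma nGE_inv {n : (Module.End F V)ˣ} {u : Module.End F V}
    (hu : u ∈ nGE r d e 1) (hn : (n : Module.End F V) = 1 + u) :
    ∃ v ∈ nGE r d e 1, ((n⁻¹ : (Module.End F V)ˣ) : Module.End F V) = 1 + v := by
  obtain ⟨v, hnv⟩ : ∃ v, ((n⁻¹ : (Module.End F V)ˣ) : Module.End F V) = 1 + v :=
    ⟨((n⁻¹ : (Module.End F V)ˣ) : Module.End F V) - 1, by abel⟩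
  have h1 : (1 + u) * (1 + v) = 1 := by
    rw [← hn, ← hnv]; exact n.mul_inv
  have hvu : v = -u - u * v := by
    have h2 : (1:Module.End F V) + (v + (u + u * v)) = (1 + u) * (1 + v) := by
      noncomm_ring
    rw [h1] at h2
    have h3 : v + (u + u * v) = 0 := by
      have := h2.trans (add_zero (1:Module.End F V)).symm
      exact add_left_cancel this
    have h4 := eq_neg_of_add_eq_zero_left h3
    conv_lhs => rw [h4]
    noncomm_ring
  have hK : (0:ℤ) ≤ (r:ℤ)*r + 3*r := by positivity
  have step : ∀ s : ℤ, s ≤ 0 → v ∈ nGE r d e s → v ∈ nGE r d e (s+1) := by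
    intro s hs hvs
    have h4 : u * v ∈ nGE r d e (1 + s) := nGE_mul hu hvs
    have h5 : -u - u * v ∈ nGE r d e (s+1) := by
      rw [sub_eq_add_neg]
      refine nGE_add (nGE_mono (by omega) (nGE_neg hu)) ?_
      rw [show s+1 = 1+s by ring]
      exact nGE_neg h4
    rw [← hvu] at h5
    exact h5
  have claim : ∀ k : ℕ, (k:ℤ) ≤ (r:ℤ)*r + 3*r →
      v ∈ nGE r d e (1 - ((r:ℤ)*r + 3*r) + k) := by
    intro k
    induction k with
    | zero => intro _; simpa using nGE_univ v
    | succ k ih =>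
      intro hk
      have hk' : (k:ℤ) ≤ (r:ℤ)*r + 3*r := by push_cast at hk; omega
      have h6 := step (1 - ((r:ℤ)*r + 3*r) + k) (by push_cast at hk; omega) (ih hk')
      have hcast : (1:ℤ) - ((r:ℤ)*r + 3*r) + (k:ℤ) + 1
          = 1 - ((r:ℤ)*r + 3*r) + ((k+1:ℕ):ℤ) := by push_cast; ring
      rw [hcast] at h6
      exact h6
  refine ⟨v, ?_, hnv⟩
  have hfin := claim (r*r + 3*r) (by push_cast; omega)
  have hcast2 : (1:ℤ) - ((r:ℤ)*r + 3*r) + ((r*r+3*r:ℕ):ℤ) = 1 := by push_cast; ring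
  rw [hcast2] at hfin
  exact hfin

lemma Nset_mul {n₁ n₂ : (Module.End F V)ˣ} (h1 : n₁ ∈ Nset r d e)
    (h2 : n₂ ∈ Nset r d e) : n₁ * n₂ ∈ Nset r d e := by
  obtain ⟨u₁, hu₁, he₁⟩ := h1
  obtain ⟨u₂, hu₂, he₂⟩ := h2
  refine ⟨u₂ + u₁ + u₁ * u₂, ?_, ?_⟩
  · exact nGE_add (nGE_add hu₂ hu₁) (nGE_mono (by omega) (nGE_mul hu₁ hu₂))
  · rw [Units.val_mul, he₁, he₂]; noncomm_ring

lemma Nset_inv {n : (Module.End F V)ˣ} (h : n ∈ Nset r d e) :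
    n⁻¹ ∈ Nset r d e := by
  obtain ⟨u, hu, he⟩ := h
  obtain ⟨v, hv, he'⟩ := nGE_inv hu he
  exact ⟨v, hv, he'⟩

/-! ### The operators `S`, powers of `X`, and `L` -/

/-- The shift-up operator `S`. -/
noncomputable def Sop : Module.End F V :=
  e.constr ℕ fun z => if h : z.val.1 + 1 ≤ z.val.2.1
    then e (rshift z (z.val.1+1) (by omega) h) else 0

variable (e)

lemma Sop_apply_le (z : RIdx r d) (h : z.val.1 + 1 ≤ z.val.2.1) :
    Sop (e := e) (e z) = e (rshift z (z.val.1+1) (by omega) h) := by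
  rw [Sop, e.constr_basis, dif_pos h]

lemma Sop_apply_top (z : RIdx r d) (h : ¬ z.val.1 + 1 ≤ z.val.2.1) :
    Sop (e := e) (e z) = 0 := by
  rw [Sop, e.constr_basis, dif_neg h]

lemma e_rshift_congr (z : RIdx r d) {a b : ℕ} {ha1 ha2 hb1 hb2} (h : a = b) :
    e (rshift z a ha1 ha2) = e (rshift z b hb1 hb2) := by subst h; rfl

lemma Spow_le (m : ℕ) (z : RIdx r d) (h : z.val.1 + m ≤ z.val.2.1) :
    ((Sop (e := e)) ^ m) (e z)
      = e (rshift z (z.val.1+m) (by have := z.prop.1; omega) h) := by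
  induction m generalizing z with
  | zero => simp [rshift_self]
  | succ m ih =>
    rw [pow_succ, Module.End.mul_apply, Sop_apply_le e z (by omega),
      ih _ (by simp; omega), rshift_rshift]
    exact e_rshift_congr e z (by simp; omega)

lemma Spow_gt (m : ℕ) (z : RIdx r d) (h : ¬ z.val.1 + m ≤ z.val.2.1) :
    ((Sop (e := e)) ^ m) (e z) = 0 := by
  induction m generalizing z with
  | zero => exact absurd (by simpa using z.prop.2.1) h
  | succ m ih =>
    rw [pow_succ, Module.End.mul_apply]
    by_cases h1 : z.val.1 + 1 ≤ z.val.2.1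
    · rw [Sop_apply_le e z h1, ih _ (by simp; omega)]
    · rw [Sop_apply_top e z h1, map_zero]

variable (X : Module.End F V)
  (hX0 : ∀ x : RIdx r d, x.val.1 = 1 → X (e x) = 0)
  (hXs : ∀ x y : RIdx r d, x.val.1 = y.val.1 + 1 → x.val.2 = y.val.2 →
      X (e x) = e y)

include hXs in
lemma X_down (z : RIdx r d) (h : 2 ≤ z.val.1) :
    X (e z) = e (rshift z (z.val.1 - 1) (by omega) (by
      have := z.prop.2.1; omega)) := by
  apply hXs
  · simp; omega
  · simp

include hXs in
lemma Xpow_lt (m : ℕ) (z : RIdx r d) (h : m < z.val.1) :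
    (X ^ m) (e z) = e (rshift z (z.val.1 - m) (by omega) (by
      have := z.prop.2.1; omega)) := by
  induction m generalizing z with
  | zero => simp [rshift_self]
  | succ m ih =>
    rw [pow_succ', Module.End.mul_apply, ih _ (by omega),
      X_down e X hXs _ (by simp; omega), rshift_rshift]
    exact e_rshift_congr e z (by simp; omega)

include hX0 hXs in
lemma Xpow_ge (m : ℕ) (z : RIdx r d) (h : z.val.1 ≤ m) :
    (X ^ m) (e z) = 0 := by
  induction m generalizing z with
  | zero => have := z.prop.1; omega
  | succ m ih =>
    rw [pow_succ', Module.End.mul_apply]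
    by_cases h1 : z.val.1 ≤ m
    · rw [ih _ h1, map_zero]
    · rw [Xpow_lt e X hXs m z (by omega)]
      apply hX0
      simp; omega

/-- The explicit right inverse `L` of `u ↦ [X,u]`. -/
noncomputable def Lop (Z : Module.End F V) : Module.End F V :=
  -(∑ m ∈ Finset.range (r+1), X^m * Z * (Sop (e := e))^(m+1))

lemma Lop_sub (Z₁ Z₂ : Module.End F V) :
    Lop e X Z₁ - Lop e X Z₂ = Lop e X (Z₁ - Z₂) := by
  rw [Lop, Lop, Lop]
  have h0 : ∀ A B : Module.End F V, -A - -B = -(A - B) := fun A B => by abel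
  rw [h0, ← Finset.sum_sub_distrib]
  congr 1
  refine Finset.sum_congr rfl fun m _ => ?_
  noncomm_ring

include hX0 hXs in
lemma Lop_mem {Z : Module.End F V} {t : ℤ} (ht : 1 ≤ t)
    (hZ : Z ∈ oGE r d e t) : Lop e X Z ∈ nGE r d e t := by
  refine nGE_neg (nGE_sum fun m _ => ?_)
  intro x y h
  rw [show ((X^m * Z * (Sop (e := e))^(m+1)) (e x))
      = (X^m) (Z (((Sop (e := e))^(m+1)) (e x))) from rfl] at h
  by_cases hval : x.val.1 + (m+1) ≤ x.val.2.1
  · rw [Spow_le e (m+1) x hval] at h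
    obtain ⟨w, hw1, hw2⟩ := exists_mid e h
    have hZ' := hZ _ w hw1
    rw [rshift_val] at hZ'
    simp only at hZ'
    have hZ2 := hZ'.2
    rw [show x.val.1 + (m+1) - 1 = x.val.1 + m by omega] at hZ2
    -- w.1 ≤ x.1 + m
    have hwle : w.val.1 ≤ x.val.1 + m := by
      refine pfunA r (i := x.val.1 + m) (j := x.val.2.1) (by omega) x.prop.2.2.1
        w.prop.2.1 w.prop.2.2.1 ?_
      omega
    -- m < w.1
    have hmw : m < w.val.1 := by
      by_contra hc
      rw [Xpow_ge e X hX0 hXs m w (by omega)] at hw2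
      simp at hw2
    rw [Xpow_lt e X hXs m w hmw] at hw2
    have hy := eq_of_repr_basis e hw2
    have hy1 : y.val.1 = w.val.1 - m := by rw [hy]; rfl
    have hy2 : y.val.2.1 = w.val.2.1 := by rw [hy]; rfl
    rw [hy1, hy2]
    exact pC r x.val.1 x.val.2.1 w.val.1 w.val.2.1 m (by omega) hwle hZ2
  · rw [Spow_gt e (m+1) x hval] at h
    simp at h

include hX0 hXs in
lemma Lop_comm {Z : Module.End F V} (hZ : Z ∈ oGE r d e 1) :
    X * Lop e X Z - Lop e X Z * X = Z := by
  apply e.ext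
  intro z
  set c : ℕ → V := fun m => (X^m) (Z (((Sop (e := e))^m) (e z))) with hc
  have hXL : (X * Lop e X Z) (e z) = -∑ m ∈ Finset.range (r+1), c (m+1) := by
    rw [Module.End.mul_apply, Lop, LinearMap.neg_apply, LinearMap.sum_apply,
      map_neg, map_sum]
    congr 1
    refine Finset.sum_congr rfl fun m _ => ?_
    rw [show ((X^m * Z * (Sop (e := e))^(m+1)) (e z))
        = (X^m) (Z (((Sop (e := e))^(m+1)) (e z))) from rfl, hc]
    simp only
    rw [← Module.End.mul_apply X (X^m), ← pow_succ']
  have hctop : c (r+1) = 0 := by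
    rw [hc]
    exact apply_eq_zero_of e _ _ fun w _ =>
      Xpow_ge e X hX0 hXs (r+1) w (by have := w.prop.2.1; have := w.prop.2.2.1; omega)
  have hczero : c 0 = Z (e z) := by simp [hc]
  by_cases hz1 : z.val.1 = 1
  · -- bottom level
    have hXez : X (e z) = 0 := hX0 z hz1
    have hLX : (Lop e X Z * X) (e z) = 0 := by
      rw [Module.End.mul_apply, hXez, map_zero]
    have hterm : ∀ m ∈ Finset.range (r+1), c (m+1) = 0 := by
      intro m _
      rw [hc]
      simp only
      by_cases hval : z.val.1 + (m+1) ≤ z.val.2.1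
      · rw [Spow_le e (m+1) z hval]
        refine apply_eq_zero_of e _ _ fun w hw => ?_
        have hZ' := hZ _ w hw
        rw [rshift_val] at hZ'
        simp only at hZ'
        have h2 := hZ'.2
        rw [show z.val.1 + (m+1) - 1 = z.val.1 + m by omega] at h2
        have hwle : w.val.1 ≤ z.val.1 + m :=
          pfunA r (by omega) z.prop.2.2.1 w.prop.2.1 w.prop.2.2.1 (by omega)
        exact Xpow_ge e X hX0 hXs (m+1) w (by omega)
      · rw [Spow_gt e (m+1) z hval]
        simp
    rw [LinearMap.sub_apply, hXL, hLX, Finset.sum_congr rfl hterm]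
    simp [oGE_bot hZ hz1]
  · -- higher level
    have hz2 : 2 ≤ z.val.1 := by have := z.prop.1; omega
    have hXez : X (e z) = e (rshift z (z.val.1 - 1) (by omega)
        (by have := z.prop.2.1; omega)) := X_down e X hXs z hz2
    have hSdown : ∀ m : ℕ, ((Sop (e := e))^(m+1)) (e (rshift z (z.val.1 - 1)
        (by omega) (by have := z.prop.2.1; omega))) = ((Sop (e := e))^m) (e z) := by
      intro m
      by_cases hval : z.val.1 + m ≤ z.val.2.1
      · rw [Spow_le e m z hval, Spow_le e (m+1) _ (by simp; omega), rshift_rshift]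
        exact e_rshift_congr e z (by simp; omega)
      · rw [Spow_gt e m z hval, Spow_gt e (m+1) _ (by simp; omega)]
    have hLX : (Lop e X Z * X) (e z) = -∑ m ∈ Finset.range (r+1), c m := by
      rw [Module.End.mul_apply, hXez, Lop, LinearMap.neg_apply, LinearMap.sum_apply]
      congr 1
      refine Finset.sum_congr rfl fun m _ => ?_
      rw [show ((X^m * Z * (Sop (e := e))^(m+1)) (e (rshift z (z.val.1 - 1) _ _)))
          = (X^m) (Z (((Sop (e := e))^(m+1)) (e (rshift z (z.val.1 - 1) _ _)))) from rfl,
        hSdown m, hc]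
    rw [LinearMap.sub_apply, hXL, hLX]
    have htel : ∑ m ∈ Finset.range (r+1), c (m+1) - ∑ m ∈ Finset.range (r+1), c m
        = c (r+1) - c 0 := by
      rw [← Finset.sum_sub_distrib]
      exact Finset.sum_range_sub c (r+1)
    have : -∑ m ∈ Finset.range (r+1), c (m+1) - -∑ m ∈ Finset.range (r+1), c m
        = -(c (r+1) - c 0) := by rw [← htel]; abel
    rw [this, hctop, hczero]
    simp


include hX0 hXs in
lemma XuuX_mem {u : Module.End F V} (hu : u ∈ nGE r d e 1) :
    X * u - u * X ∈ oGE r d e 1 := by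
  intro x y h
  rw [LinearMap.sub_apply, map_sub, Finsupp.sub_apply] at h
  have h' : e.repr ((X * u) (e x)) y ≠ 0 ∨ e.repr ((u * X) (e x)) y ≠ 0 := by
    by_contra hc
    push_neg at hc
    rw [hc.1, hc.2, sub_zero] at h
    exact h rfl
  rcases h' with h' | h'
  · -- X ∘ u part
    rw [Module.End.mul_apply] at h'
    obtain ⟨z, hz1, hz2⟩ := exists_mid e h'
    have hz2' : 2 ≤ z.val.1 := by
      by_contra hc
      rw [hX0 z (by have := z.prop.1; omega)] at hz2
      simp at hz2
    rw [X_down e X hXs z hz2'] at hz2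
    have hy := eq_of_repr_basis e hz2
    have hy1 : y.val.1 = z.val.1 - 1 := by rw [hy]; rfl
    have hy2 : y.val.2.1 = z.val.2.1 := by rw [hy]; rfl
    have hp := hu x z hz1
    have hzx : z.val.1 ≤ x.val.1 :=
      pfunA r x.prop.2.1 x.prop.2.2.1 z.prop.2.1 z.prop.2.2.1 (by omega)
    refine ⟨by omega, ?_⟩
    rw [hy1, hy2]
    refine pB r x.val.1 x.val.2.1 (z.val.1 - 1) z.val.2.1 (by omega) ?_
    rw [show z.val.1 - 1 + 1 = z.val.1 by omega]
    exact hp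
  · -- u ∘ X part
    rw [Module.End.mul_apply] at h'
    have hx2 : 2 ≤ x.val.1 := by
      by_contra hc
      rw [hX0 x (by have := x.prop.1; omega)] at h'
      simp at h'
    rw [X_down e X hXs x hx2] at h'
    have hp := hu _ y h'
    rw [rshift_val] at hp
    simp only at hp
    exact ⟨by omega, hp⟩

end


/-- the map `φ(n) = n⁻¹ ∘ X ∘ n − X` on `N` takes values in `𝔬`, is
surjective onto `𝔬`, and `φ(n₁) = φ(n₂)` iff `n₂ ∘ n₁⁻¹ ∈ N_X` (i.e. `n₂ n₁⁻¹ ∈ N`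
and commutes with `X`); hence it induces a bijection `N_X\N ≃ 𝔬`. -/
theorem stmt_14 (r : ℕ) (hr : 1 ≤ r) (d : ℕ → ℕ) (hd : 1 ≤ d r)
    (F : Type*) [Field F] [CharZero F] (V : Type*) [AddCommGroup V] [Module F V]
    (e : Module.Basis (RIdx r d) F V) (X : Module.End F V)
    (hX0 : ∀ x : RIdx r d, x.val.1 = 1 → X (e x) = 0)
    (hXs : ∀ x y : RIdx r d, x.val.1 = y.val.1 + 1 → x.val.2 = y.val.2 →
      X (e x) = e y) :
    (∀ n ∈ Nset r d e,
      ((n⁻¹ : (Module.End F V)ˣ) : Module.End F V) * X * (n : Module.End F V) - X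
        ∈ oGE r d e 1) ∧
    (∀ Y ∈ oGE r d e 1, ∃ n ∈ Nset r d e,
      ((n⁻¹ : (Module.End F V)ˣ) : Module.End F V) * X * (n : Module.End F V) - X
        = Y) ∧
    (∀ n₁ ∈ Nset r d e, ∀ n₂ ∈ Nset r d e,
      (((n₁⁻¹ : (Module.End F V)ˣ) : Module.End F V) * X * (n₁ : Module.End F V) - X
          = ((n₂⁻¹ : (Module.End F V)ˣ) : Module.End F V) * X * (n₂ : Module.End F V) - X
        ↔ (n₂ * n₁⁻¹ ∈ Nset r d e ∧
            ((n₂ * n₁⁻¹ : (Module.End F V)ˣ) : Module.End F V) * X =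
              X * ((n₂ * n₁⁻¹ : (Module.End F V)ˣ) : Module.End F V)))) := by
  refine ⟨?_, ?_, ?_⟩
  · -- Part 1
    rintro n ⟨u, hu, hn1⟩
    obtain ⟨v, hv, hn2⟩ := nGE_inv hu hn1
    rw [hn1, hn2]
    have h1 : ((1:Module.End F V) + v) * (1 + u) = 1 := by
      rw [← hn1, ← hn2]; exact n.inv_mul
    have key : (1 + v) * X * (1 + u) - X
        = (X * u - u * X) + v * (X * u - u * X) := by
      calc (1 + v) * X * (1 + u) - X
          = (1 + v) * X * (1 + u) - ((1 + v) * (1 + u)) * X := by rw [h1, one_mul]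
        _ = (X * u - u * X) + v * (X * u - u * X) := by noncomm_ring
    rw [key]
    have hXu := XuuX_mem e X hX0 hXs hu
    exact oGE_add hXu (oGE_mono (by omega) (nGE_mul_oGE hv hXu))
  · -- Part 2 : surjectivity
    intro Y hY
    set K : ℕ := r*r + 3*r + 2 with hK
    set f : Module.End F V → Module.End F V := fun w => Lop e X (Y + w * Y) with hf
    have hfapp : ∀ w, f w = Lop e X (Y + w * Y) := fun w => rfl
    have harg : ∀ w ∈ nGE r d e 1, Y + w * Y ∈ oGE r d e 1 := fun w hw =>
      oGE_add hY (oGE_mono (by omega) (nGE_mul_oGE hw hY))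
    have claim1 : ∀ k : ℕ, f^[k] 0 ∈ nGE r d e 1 := by
      intro k; induction k with
      | zero => simpa using nGE_zero_mem
      | succ k ih =>
        rw [Function.iterate_succ_apply', hfapp]
        exact Lop_mem e X hX0 hXs (le_refl 1) (harg _ ih)
    have claim2 : ∀ k : ℕ, f^[k+1] 0 - f^[k] 0 ∈ nGE r d e ((k:ℤ)+1) := by
      intro k; induction k with
      | zero =>
        have h0 : f^[1] 0 - f^[0] 0 = Lop e X Y := by
          rw [Function.iterate_one, Function.iterate_zero, id, hfapp]
          simp
        rw [h0]
        simpa using Lop_mem e X hX0 hXs (le_refl 1) hY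
      | succ k ih =>
        rw [Function.iterate_succ_apply' f k, Function.iterate_succ_apply' f (k+1)]
        have hdiff : f (f^[k+1] 0) - f (f^[k] 0)
            = Lop e X ((f^[k+1] 0 - f^[k] 0) * Y) := by
          rw [hfapp, hfapp, Lop_sub]
          congr 1
          noncomm_ring
        rw [hdiff]
        have hmem := nGE_mul_oGE ih hY
        have hres := Lop_mem e X hX0 hXs (by
          have : (0:ℤ) ≤ (k:ℤ) := by positivity
          omega) hmem
        have hcast : ((k:ℤ)+1) + 1 = ((k+1:ℕ):ℤ) + 1 := by push_cast; ring
        rw [hcast] at hres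
        exact hres
    set u := f^[K] 0 with hu_def
    have hfix : f u = u := by
      have h1 := claim2 K
      have h2 : f^[K+1] 0 - f^[K] 0 = 0 := by
        refine nGE_eq_zero (nGE_mono ?_ h1)
        rw [hK]; push_cast; omega
      have h3 : f^[K+1] 0 = f^[K] 0 := by rwa [sub_eq_zero] at h2
      rw [Function.iterate_succ_apply'] at h3
      exact h3
    have hu1 : u ∈ nGE r d e 1 := claim1 K
    have hueq : u = Lop e X (Y + u * Y) := by
      conv_lhs => rw [← hfix, hfapp]
    have hYu : Y + u * Y ∈ oGE r d e 1 := harg u hu1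
    have hcomm : X * u - u * X = Y + u * Y := by
      conv_lhs => rw [hueq]
      exact Lop_comm e X hX0 hXs hYu
    have hnil : IsNilpotent u := by
      refine ⟨K, ?_⟩
      refine nGE_eq_zero (nGE_mono ?_ (nGE_pow hu1 K (by omega)))
      rw [hK]; push_cast; omega
    have hunit : IsUnit ((1:Module.End F V) + u) := IsNilpotent.isUnit_one_add hnil
    refine ⟨hunit.unit, ⟨u, hu1, hunit.unit_spec.symm⟩, ?_⟩
    have hn1 : (↑hunit.unit : Module.End F V) = 1 + u := hunit.unit_spec
    have h2' : X * (↑hunit.unit : Module.End F V) = ↑hunit.unit * (Y + X) := by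
      rw [hn1]
      have h4 : X * ((1:Module.End F V) + u) - (1 + u) * X = X * u - u * X := by
        noncomm_ring
      have h5 : X * ((1:Module.End F V) + u) - (1 + u) * X = (1 + u) * Y := by
        rw [h4, hcomm]; noncomm_ring
      have h6 := sub_eq_iff_eq_add.mp h5
      rw [h6, mul_add]
    calc (↑hunit.unit⁻¹ : Module.End F V) * X * ↑hunit.unit - X
        = ↑hunit.unit⁻¹ * (X * ↑hunit.unit) - X := by rw [mul_assoc]
      _ = ↑hunit.unit⁻¹ * (↑hunit.unit * (Y + X)) - X := by rw [h2']
      _ = (Y + X) - X := by rw [← mul_assoc, Units.inv_mul, one_mul]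
      _ = Y := by abel
  · -- Part 3
    rintro n₁ hn₁ n₂ hn₂
    constructor
    · intro h
      have h' : ((n₁⁻¹ : (Module.End F V)ˣ) : Module.End F V) * X * ↑n₁
          = ((n₂⁻¹ : (Module.End F V)ˣ) : Module.End F V) * X * ↑n₂ := by
        have := congrArg (· + X) h
        simpa using this
      refine ⟨Nset_mul hn₂ (Nset_inv hn₁), ?_⟩
      have h3 := congrArg
        (fun A => (↑n₂ : Module.End F V) * A * (↑n₁⁻¹ : Module.End F V)) h'
      simp only [← mul_assoc] at h3
      rw [Units.mul_inv_cancel_right, Units.mul_inv, one_mul, mul_assoc] at h3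
      rw [Units.val_mul]
      rw [mul_assoc]
      exact h3
    · rintro ⟨_, hcomm⟩
      rw [Units.val_mul] at hcomm
      have h3 := congrArg
        (fun A => (↑n₂⁻¹ : Module.End F V) * A * (↑n₁ : Module.End F V)) hcomm
      simp only [← mul_assoc] at h3
      rw [Units.inv_mul, one_mul, Units.inv_mul_cancel_right] at h3
      rw [sub_left_inj]
      exact h3
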